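/- The twisted kernel product (K₁*K₂)(x,z) = ∫ φ(x,y,z) K₁(x,y) K₂(y,z) dy is associative if and only if φ(x,y,z)·φ(x,z,w) = φ(x,y,w)·φ(y,z,w) for all x,y,z,w ∈ G. -/

import Mathlib

open Function

/-- The twisted kernel product `(K₁*K₂)(x,z) = Σ_y φ(x,y,z) K₁(x,y) K₂(y,z)` is
associative if and only if `φ(x,y,z)·φ(x,z,w) = φ(x,y,w)·φ(y,z,w)` for all
`x,y,z,w ∈ G`. -/
theorem stmt_8 (G : Type*) [Group G] (φ : G → G → G → ℂˣ)
    -- φ is an antisymmetric tricharacter with values in the circle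
    (hnorm : ∀ x y z, ‖((φ x y z : ℂˣ) : ℂ)‖ = 1)
    (h1 : ∀ x x' y z, φ (x * x') y z = φ x y z * φ x' y z)
    (h2 : ∀ x y y' z, φ x (y * y') z = φ x y z * φ x y' z)
    (h3 : ∀ x y z z', φ x y (z * z') = φ x y z * φ x y z')
    (ha1 : ∀ x y z, φ y x z = (φ x y z)⁻¹)
    (ha2 : ∀ x y z, φ x z y = (φ x y z)⁻¹)
    -- the twisted kernel product
    (mul : (G → G → ℂ) → (G → G → ℂ) → (G → G → ℂ))
    (hmul : ∀ K₁ K₂ x z, mul K₁ K₂ x z = ∑ᶠ y, ((φ x y z : ℂˣ) : ℂ) * K₁ x y * K₂ y z) :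
    (∀ K₁ K₂ K₃ : G → G → ℂ,
        (Function.support fun p : G × G => K₁ p.1 p.2).Finite →
        (Function.support fun p : G × G => K₂ p.1 p.2).Finite →
        (Function.support fun p : G × G => K₃ p.1 p.2).Finite →
        mul (mul K₁ K₂) K₃ = mul K₁ (mul K₂ K₃)) ↔
      ∀ x y z w, φ x y z * φ x z w = φ x y w * φ y z w := by
  classical
  constructor
  · intro hassoc x y z w
    set K₁ : G → G → ℂ := fun a b => if a = x ∧ b = y then 1 else 0 with hK₁
    set K₂ : G → G → ℂ := fun a b => if a = y ∧ b = z then 1 else 0 with hK₂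
    set K₃ : G → G → ℂ := fun a b => if a = z ∧ b = w then 1 else 0 with hK₃
    have hf : ∀ a b : G,
        (Function.support fun p : G × G =>
          (if p.1 = a ∧ p.2 = b then (1 : ℂ) else 0)).Finite := by
      intro a b
      apply Set.Finite.subset (Set.finite_singleton (a, b))
      intro p hp
      simp only [Function.mem_support, ne_eq, ite_eq_right_iff, not_forall] at hp
      obtain ⟨⟨hp1, hp2⟩, -⟩ := hp
      simp [Prod.ext_iff, hp1, hp2]
    have h := hassoc K₁ K₂ K₃ (hf x y) (hf y z) (hf z w)
    have h' := congrFun (congrFun h x) w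
    have e12 : mul K₁ K₂ x z = ((φ x y z : ℂˣ) : ℂ) := by
      rw [hmul]
      rw [finsum_eq_single _ y (by
        intro y' hy'
        simp [hK₁, hy'])]
      simp [hK₁, hK₂]
    have e23 : mul K₂ K₃ y w = ((φ y z w : ℂˣ) : ℂ) := by
      rw [hmul]
      rw [finsum_eq_single _ z (by
        intro z' hz'
        simp [hK₂, hz'])]
      simp [hK₂, hK₃]
    have eL : mul (mul K₁ K₂) K₃ x w
        = ((φ x z w : ℂˣ) : ℂ) * ((φ x y z : ℂˣ) : ℂ) := by
      rw [hmul]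
      rw [finsum_eq_single _ z (by
        intro z' hz'
        simp [hK₃, hz'])]
      simp [hK₃, e12]
    have eR : mul K₁ (mul K₂ K₃) x w
        = ((φ x y w : ℂˣ) : ℂ) * ((φ y z w : ℂˣ) : ℂ) := by
      rw [hmul]
      rw [finsum_eq_single _ y (by
        intro y' hy'
        simp [hK₁, hy'])]
      simp [hK₁, e23]
    have hC : ((φ x z w : ℂˣ) : ℂ) * ((φ x y z : ℂˣ) : ℂ)
        = ((φ x y w : ℂˣ) : ℂ) * ((φ y z w : ℂˣ) : ℂ) := by
      rw [← eL, ← eR, h']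
    exact Units.ext (by push_cast; linear_combination hC)
  · intro hc K₁ K₂ K₃ hS₁ hS₂ hS₃
    have hcc : ∀ x y z w : G,
        ((φ x y z : ℂˣ) : ℂ) * ((φ x z w : ℂˣ) : ℂ)
          = ((φ x y w : ℂˣ) : ℂ) * ((φ y z w : ℂˣ) : ℂ) := by
      intro x y z w
      exact_mod_cast congrArg Units.val (hc x y z w)
    funext x w
    set F : G × G → ℂ := fun p =>
      ((φ x p.2 w : ℂˣ) : ℂ) * ((φ x p.1 p.2 : ℂˣ) : ℂ) * K₁ x p.1 * K₂ p.1 p.2 * K₃ p.2 w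
      with hF_def
    have hF : (Function.support F).Finite := by
      apply hS₂.subset
      intro p hp
      simp only [Function.mem_support, hF_def] at hp ⊢
      intro h0
      exact hp (by rw [h0]; ring)
    have hK₂l : ∀ z : G, (Function.support fun y => K₂ y z).Finite := by
      intro z
      apply Set.Finite.subset
        (hS₂.preimage (f := fun y : G => (y, z))
          (Set.injOn_of_injective (fun a b hab => (Prod.ext_iff.mp hab).1)))
      intro y hy
      exact hy
    have hK₂r : ∀ y : G, (Function.support fun z => K₂ y z).Finite := by
      intro y
      apply Set.Finite.subset
        (hS₂.preimage (f := fun z : G => (y, z))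
          (Set.injOn_of_injective (fun a b hab => (Prod.ext_iff.mp hab).2)))
      intro z hz
      exact hz
    have hfin1 : ∀ z : G,
        (Function.support fun y => ((φ x y z : ℂˣ) : ℂ) * K₁ x y * K₂ y z).Finite := by
      intro z
      apply (hK₂l z).subset
      intro y hy
      exact right_ne_zero_of_mul hy
    have hfin2 : ∀ y : G,
        (Function.support fun z => ((φ y z w : ℂˣ) : ℂ) * K₂ y z * K₃ z w).Finite := by
      intro y
      apply (hK₂r y).subset
      intro z hz
      exact right_ne_zero_of_mul (left_ne_zero_of_mul hz)
    have stepL : ∀ z : G, ((φ x z w : ℂˣ) : ℂ) * mul K₁ K₂ x z * K₃ z w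
        = ∑ᶠ y, F (y, z) := by
      intro z
      rw [hmul, mul_finsum' _ _ (hfin1 z), finsum_mul' _ _
        ((hfin1 z).subset (fun y hy => right_ne_zero_of_mul hy))]
      exact finsum_congr fun y => by simp only [hF_def]; ring
    have stepR : ∀ y : G, ((φ x y w : ℂˣ) : ℂ) * K₁ x y * mul K₂ K₃ y w
        = ∑ᶠ z, F (y, z) := by
      intro y
      rw [hmul, mul_finsum' _ _ (hfin2 y)]
      refine finsum_congr fun z => ?_
      simp only [hF_def]
      linear_combination (-(K₁ x y * K₂ y z * K₃ z w)) * hcc x y z w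
    have hFswap : (Function.support fun p : G × G => F (p.2, p.1)).Finite :=
      (hF.preimage (Set.injOn_of_injective Prod.swap_injective)).subset fun p hp => hp
    calc mul (mul K₁ K₂) K₃ x w
        = ∑ᶠ z, ∑ᶠ y, F (y, z) := by
          rw [hmul]; exact finsum_congr stepL
      _ = ∑ᶠ p : G × G, F (p.2, p.1) := (finsum_curry _ hFswap).symm
      _ = ∑ᶠ p : G × G, F p := finsum_comp_equiv (Equiv.prodComm G G)
      _ = ∑ᶠ y, ∑ᶠ z, F (y, z) := finsum_curry F hF
      _ = mul K₁ (mul K₂ K₃) x w := by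
          rw [hmul]; exact (finsum_congr stepR).symm
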